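/- In the Witt setup, let a : R⊗M → V⊗M be any k-linear map, write a(f⊗x) = Σ_{i=1}^n x_i ⊗ a_i(f⊗x) with a_i(f⊗x) ∈ M, and define ρ_a : Der_k(R) → End_k(M) by ρ_a(D)(x) = Σ_{i=1}^n a_i(D(x_i)⊗x) (recall every k-derivation D of R equals Σ_i D(x_i)·∂/∂x_i). Then ρ_a is a Lie algebra homomorphism from the Lie algebra Der_k(R) of k-derivations of R (with the commutator bracket) to End_k(M) (i.e., ρ_a(D∘D′−D′∘D) = ρ_a(D)ρ_a(D′) − ρ_a(D′)ρ_a(D) for all derivations D,D′) if and only if a satisfies the curried Witt identity. -/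

import Mathlib

open TensorProduct

set_option maxSynthPendingDepth 3
set_option synthInstance.maxHeartbeats 400000
set_option maxHeartbeats 1000000

namespace CurriedWitt

variable (k : Type) [CommRing k] (n : ℕ)

/-- `R = k[x_1, …, x_n]`. -/
abbrev R := MvPolynomial (Fin n) k

/-- `V ⊆ R`: the free `k`-submodule spanned by the variables `x_1, …, x_n`. -/
noncomputable def V : Submodule k (R k n) :=
  Submodule.span k (Set.range (MvPolynomial.X : Fin n → R k n))

/-- The variable `x_i` as an element of `V`. -/
noncomputable def xV (i : Fin n) : V k n :=
  ⟨MvPolynomial.X i, Submodule.subset_span ⟨i, rfl⟩⟩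

variable (M : Type) [AddCommGroup M] [Module k M]

/-- `Δ_W : R → V ⊗ R`, `f ↦ ∑ᵢ xᵢ ⊗ ∂f/∂xᵢ`. -/
noncomputable def ΔW : R k n →ₗ[k] (V k n) ⊗[k] (R k n) :=
  ∑ i : Fin n, (TensorProduct.mk k (V k n) (R k n) (xV k n i)) ∘ₗ
    (MvPolynomial.pderiv i).toLinearMap

/-- The braiding `τ_{P,Q} ⊗ id_M : P ⊗ (Q ⊗ M) → Q ⊗ (P ⊗ M)`. -/
noncomputable def swapL (P Q : Type) [AddCommGroup P] [Module k P]
    [AddCommGroup Q] [Module k Q] :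
    P ⊗[k] (Q ⊗[k] M) →ₗ[k] Q ⊗[k] (P ⊗[k] M) :=
  (TensorProduct.assoc k Q P M).toLinearMap ∘ₗ
    LinearMap.rTensor M (TensorProduct.comm k P Q).toLinearMap ∘ₗ
    (TensorProduct.assoc k P Q M).symm.toLinearMap

variable {k n M}

/-- `a′ = (id_V ⊗ a) ∘ (id_V ⊗ m ⊗ id_M) ∘ (τ_{R,V} ⊗ id_{R⊗M}) ∘ (id_R ⊗ Δ_W ⊗ id_M)`. -/
noncomputable def aPrime (a : (R k n) ⊗[k] M →ₗ[k] (V k n) ⊗[k] M) :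
    (R k n) ⊗[k] ((R k n) ⊗[k] M) →ₗ[k] (V k n) ⊗[k] ((V k n) ⊗[k] M) :=
  LinearMap.lTensor (V k n) a ∘ₗ
    LinearMap.lTensor (V k n)
      (LinearMap.rTensor M (LinearMap.mul' k (R k n)) ∘ₗ
        (TensorProduct.assoc k (R k n) (R k n) M).symm.toLinearMap) ∘ₗ
    swapL k ((R k n) ⊗[k] M) (R k n) (V k n) ∘ₗ
    LinearMap.lTensor (R k n)
      ((TensorProduct.assoc k (V k n) (R k n) M).toLinearMap ∘ₗ
        LinearMap.rTensor M (ΔW k n))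

/-- `a″ = (τ_{V,V} ⊗ id_M) ∘ a′ ∘ (τ_{R,R} ⊗ id_M)`. -/
noncomputable def aDoublePrime (a : (R k n) ⊗[k] M →ₗ[k] (V k n) ⊗[k] M) :
    (R k n) ⊗[k] ((R k n) ⊗[k] M) →ₗ[k] (V k n) ⊗[k] ((V k n) ⊗[k] M) :=
  swapL k M (V k n) (V k n) ∘ₗ aPrime a ∘ₗ swapL k M (R k n) (R k n)

/-- `a₁^X = (τ_{X,V} ⊗ id_M) ∘ (id_X ⊗ a) ∘ (τ_{R,X} ⊗ id_M) : R ⊗ X ⊗ M → V ⊗ X ⊗ M`. -/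
noncomputable def aOne (a : (R k n) ⊗[k] M →ₗ[k] (V k n) ⊗[k] M)
    (X : Type) [AddCommGroup X] [Module k X] :
    (R k n) ⊗[k] (X ⊗[k] M) →ₗ[k] (V k n) ⊗[k] (X ⊗[k] M) :=
  swapL k M X (V k n) ∘ₗ LinearMap.lTensor X a ∘ₗ swapL k M (R k n) X

/-- The curried Witt identity `[a₁, a₂] = a′ − a″` for a map `a : R ⊗ M → V ⊗ M`,
where `a₂ = id_R ⊗ a` and `[a₁,a₂] = a₁^V ∘ a₂ − (id_V ⊗ a) ∘ a₁^R`. -/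
noncomputable def CurriedWittIdentity (a : (R k n) ⊗[k] M →ₗ[k] (V k n) ⊗[k] M) : Prop :=
  let lhs : (R k n) ⊗[k] ((R k n) ⊗[k] M) →ₗ[k] (V k n) ⊗[k] ((V k n) ⊗[k] M) :=
    aOne a ↥(V k n) ∘ₗ LinearMap.lTensor (R k n) a -
      LinearMap.lTensor ↥(V k n) a ∘ₗ aOne a (R k n)
  lhs = aPrime a - aDoublePrime a

end CurriedWitt

open CurriedWitt

namespace CurriedWittAux

open CurriedWitt MvPolynomial

variable {k : Type} [CommRing k] {n : ℕ} {M : Type} [AddCommGroup M] [Module k M]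

theorem deriv_sum_apply (D : Derivation k (R k n) (R k n)) (p : R k n) :
    D p = ∑ i : Fin n, D (MvPolynomial.X i) * MvPolynomial.pderiv i p := by
  have hsum : ∀ (Ds : Fin n → Derivation k (R k n) (R k n))
      (q : R k n), (∑ i : Fin n, Ds i) q = ∑ i : Fin n, Ds i q := by
    intro Ds q
    have h2 : ⇑(∑ i : Fin n, Ds i) = ∑ i : Fin n, ⇑(Ds i) :=
      map_sum (Derivation.coeFnAddMonoidHom) Ds Finset.univ
    rw [h2, Finset.sum_apply]
  have h : D = ∑ i : Fin n, D (MvPolynomial.X i) • (MvPolynomial.pderiv i) := by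
    ext j
    rw [hsum]
    simp [Derivation.smul_apply, MvPolynomial.pderiv_X, Pi.single_apply, smul_eq_mul,
      Finset.sum_ite_eq', Finset.mem_univ]
  conv_lhs => rw [h, hsum]
  simp [Derivation.smul_apply, smul_eq_mul]

theorem swapL_tmul (P Q : Type) [AddCommGroup P] [Module k P] [AddCommGroup Q] [Module k Q]
    (p : P) (q : Q) (m : M) :
    swapL k M P Q (p ⊗ₜ (q ⊗ₜ m)) = q ⊗ₜ (p ⊗ₜ m) := by
  simp [swapL]

theorem ΔW_tmul (g : R k n) :
    ΔW k n g = ∑ i : Fin n, xV k n i ⊗ₜ[k] (MvPolynomial.pderiv i g) := by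
  simp [ΔW, LinearMap.sum_apply, TensorProduct.mk_apply]

variable (a : (R k n) ⊗[k] M →ₗ[k] (V k n) ⊗[k] M)
    (aC : Fin n → ((R k n) ⊗[k] M →ₗ[k] M))
    (ha : ∀ z : (R k n) ⊗[k] M, a z = ∑ i : Fin n, (xV k n i) ⊗ₜ[k] (aC i z))

include ha

theorem aOne_tmul (X : Type) [AddCommGroup X] [Module k X] (f : R k n) (ξ : X) (x : M) :
    aOne a X (f ⊗ₜ (ξ ⊗ₜ x)) = ∑ i : Fin n, xV k n i ⊗ₜ (ξ ⊗ₜ aC i (f ⊗ₜ x)) := by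
  simp only [aOne, LinearMap.comp_apply, swapL_tmul, LinearMap.lTensor_tmul, ha,
    tmul_sum, map_sum, swapL_tmul]

theorem aPrime_tmul (f g : R k n) (x : M) :
    aPrime a (f ⊗ₜ (g ⊗ₜ x)) =
      ∑ i : Fin n, ∑ j : Fin n,
        xV k n i ⊗ₜ (xV k n j ⊗ₜ aC j ((f * MvPolynomial.pderiv i g) ⊗ₜ x)) := by
  simp only [aPrime, LinearMap.comp_apply, LinearMap.lTensor_tmul, LinearMap.rTensor_tmul,
    ΔW_tmul, TensorProduct.sum_tmul, tmul_sum, map_sum, LinearEquiv.coe_coe,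
    TensorProduct.assoc_tmul, swapL_tmul, TensorProduct.assoc_symm_tmul,
    LinearMap.mul'_apply, ha]


theorem aDoublePrime_tmul (f g : R k n) (x : M) :
    aDoublePrime a (f ⊗ₜ (g ⊗ₜ x)) =
      ∑ i : Fin n, ∑ j : Fin n,
        xV k n i ⊗ₜ (xV k n j ⊗ₜ aC i ((g * MvPolynomial.pderiv j f) ⊗ₜ x)) := by
  simp only [aDoublePrime, LinearMap.comp_apply, swapL_tmul, aPrime_tmul a aC ha,
    map_sum, swapL_tmul]
  exact Finset.sum_comm

omit ha

/-- The componentwise Witt condition. -/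
def WittP : Prop :=
  ∀ (i j : Fin n) (f g : R k n) (x : M),
    aC i (f ⊗ₜ aC j (g ⊗ₜ x)) - aC j (g ⊗ₜ aC i (f ⊗ₜ x))
      = aC j ((f * MvPolynomial.pderiv i g) ⊗ₜ x)
        - aC i ((g * MvPolynomial.pderiv j f) ⊗ₜ x)

variable (k n)

/-- Coefficient functional on `V` picking out the coefficient of `x_i`. -/
noncomputable def cV (i : Fin n) : V k n →ₗ[k] k :=
  (MvPolynomial.lcoeff k (Finsupp.single i 1)) ∘ₗ (V k n).subtype

theorem cV_xV (i p : Fin n) : cV k n i (xV k n p) = if p = i then 1 else 0 := by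
  simp only [cV, LinearMap.comp_apply, Submodule.coe_subtype, xV, MvPolynomial.lcoeff_apply]
  rw [MvPolynomial.coeff_X']
  simp [Finsupp.single_left_inj (one_ne_zero (α := ℕ)), eq_comm]

variable (M)

/-- Projection `V ⊗ M → M` along the coefficient of `x_j`. -/
noncomputable def projIn (j : Fin n) : (V k n) ⊗[k] M →ₗ[k] M :=
  TensorProduct.lift ((LinearMap.lsmul k M).comp (cV k n j))

theorem projIn_tmul (j : Fin n) (w : V k n) (m : M) :
    projIn k n M j (w ⊗ₜ m) = cV k n j w • m := rfl

/-- Projection `V ⊗ (V ⊗ M) → M` along coefficients of `x_i ⊗ x_j`. -/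
noncomputable def proj (i j : Fin n) : (V k n) ⊗[k] ((V k n) ⊗[k] M) →ₗ[k] M :=
  projIn k n M i ∘ₗ LinearMap.lTensor (V k n) (projIn k n M j)

theorem proj_tmul (i j : Fin n) (v w : V k n) (m : M) :
    proj k n M i j (v ⊗ₜ (w ⊗ₜ m)) = cV k n i v • (cV k n j w • m) := rfl

theorem proj_sum (i j : Fin n) (F : Fin n → Fin n → M) :
    proj k n M i j (∑ p : Fin n, ∑ q : Fin n, xV k n p ⊗ₜ (xV k n q ⊗ₜ F p q)) = F i j := by
  rw [map_sum]
  rw [Finset.sum_eq_single i ?_ (by simp)]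
  · rw [map_sum, Finset.sum_eq_single j ?_ (by simp)]
    · rw [proj_tmul, cV_xV, cV_xV, if_pos rfl, if_pos rfl, one_smul, one_smul]
    · intro q _ hq
      rw [proj_tmul, cV_xV k n j q, if_neg hq, zero_smul, smul_zero]
  · intro p _ hp
    rw [map_sum]
    apply Finset.sum_eq_zero
    intro q _
    rw [proj_tmul, cV_xV k n i p, if_neg hp, zero_smul]

variable {k n M}
include ha

theorem lhs_tmul (f g : R k n) (x : M) :
    (aOne a ↥(V k n) ∘ₗ LinearMap.lTensor (R k n) a -
      LinearMap.lTensor ↥(V k n) a ∘ₗ aOne a (R k n)) (f ⊗ₜ (g ⊗ₜ x)) =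
    ∑ p : Fin n, ∑ q : Fin n, xV k n p ⊗ₜ (xV k n q ⊗ₜ
      (aC p (f ⊗ₜ aC q (g ⊗ₜ x)) - aC q (g ⊗ₜ aC p (f ⊗ₜ x)))) := by
  have h1 : (aOne a ↥(V k n) ∘ₗ LinearMap.lTensor (R k n) a) (f ⊗ₜ (g ⊗ₜ x)) =
      ∑ p : Fin n, ∑ q : Fin n, xV k n p ⊗ₜ (xV k n q ⊗ₜ aC p (f ⊗ₜ aC q (g ⊗ₜ x))) := by
    rw [LinearMap.comp_apply, LinearMap.lTensor_tmul, ha, tmul_sum, map_sum]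
    rw [Finset.sum_comm]
    exact Finset.sum_congr rfl fun q _ => aOne_tmul a aC ha _ f (xV k n q) (aC q (g ⊗ₜ x))
  have h2 : (LinearMap.lTensor ↥(V k n) a ∘ₗ aOne a (R k n)) (f ⊗ₜ (g ⊗ₜ x)) =
      ∑ p : Fin n, ∑ q : Fin n, xV k n p ⊗ₜ (xV k n q ⊗ₜ aC q (g ⊗ₜ aC p (f ⊗ₜ x))) := by
    rw [LinearMap.comp_apply, aOne_tmul a aC ha _ f g x, map_sum]
    refine Finset.sum_congr rfl fun p _ => ?_
    rw [LinearMap.lTensor_tmul, ha, tmul_sum]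
  rw [LinearMap.sub_apply, h1, h2, ← Finset.sum_sub_distrib]
  refine Finset.sum_congr rfl fun p _ => ?_
  rw [← Finset.sum_sub_distrib]
  refine Finset.sum_congr rfl fun q _ => ?_
  rw [← tmul_sub, ← tmul_sub]

theorem witt_iff_P : CurriedWittIdentity a ↔ WittP aC := by
  constructor
  · intro h i j f g x
    have h' := congrArg (fun F => proj k n M i j (F (f ⊗ₜ (g ⊗ₜ x)))) h
    rw [lhs_tmul a aC ha f g x, LinearMap.sub_apply, aPrime_tmul a aC ha f g x,
      aDoublePrime_tmul a aC ha f g x, ← Finset.sum_sub_distrib] at h'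
    simp only [← Finset.sum_sub_distrib, ← tmul_sub] at h'
    rw [proj_sum, proj_sum] at h'
    exact h'
  · intro hP
    show _ = aPrime a - aDoublePrime a
    apply TensorProduct.ext'
    intro f z
    induction z with
    | zero => simp
    | add z₁ z₂ h₁ h₂ => rw [tmul_add, map_add, map_add, h₁, h₂]
    | tmul g x =>
      rw [lhs_tmul a aC ha f g x, LinearMap.sub_apply, aPrime_tmul a aC ha f g x,
        aDoublePrime_tmul a aC ha f g x, ← Finset.sum_sub_distrib]
      refine Finset.sum_congr rfl fun p _ => ?_
      rw [← Finset.sum_sub_distrib]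
      refine Finset.sum_congr rfl fun q _ => ?_
      rw [← tmul_sub, ← tmul_sub, hP p q f g x]

omit ha

variable (ρ : Derivation k (R k n) (R k n) → (M →ₗ[k] M))
  (hρ : ∀ (D : Derivation k (R k n) (R k n)),
      ρ D = ∑ i : Fin n, (aC i) ∘ₗ (TensorProduct.mk k (R k n) M (D (MvPolynomial.X i))))

include hρ

theorem ρ_apply (D : Derivation k (R k n) (R k n)) (x : M) :
    ρ D x = ∑ i : Fin n, aC i (D (MvPolynomial.X i) ⊗ₜ x) := by
  rw [hρ]
  simp [LinearMap.sum_apply]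

theorem lie_lhs (D D' : Derivation k (R k n) (R k n)) (x : M) :
    ρ ⁅D, D'⁆ x =
      (∑ m : Fin n, ∑ i : Fin n,
        aC m ((D (MvPolynomial.X i) * MvPolynomial.pderiv i (D' (MvPolynomial.X m))) ⊗ₜ x))
      - (∑ m : Fin n, ∑ i : Fin n,
        aC m ((D' (MvPolynomial.X i) * MvPolynomial.pderiv i (D (MvPolynomial.X m))) ⊗ₜ x)) := by
  rw [ρ_apply aC ρ hρ]
  have step : ∀ m : Fin n, aC m ((⁅D, D'⁆ (MvPolynomial.X m)) ⊗ₜ x) =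
      (∑ i : Fin n,
        aC m ((D (MvPolynomial.X i) * MvPolynomial.pderiv i (D' (MvPolynomial.X m))) ⊗ₜ x))
      - (∑ i : Fin n,
        aC m ((D' (MvPolynomial.X i) * MvPolynomial.pderiv i (D (MvPolynomial.X m))) ⊗ₜ x)) := by
    intro m
    rw [Derivation.commutator_apply, deriv_sum_apply D (D' (MvPolynomial.X m)),
      deriv_sum_apply D' (D (MvPolynomial.X m)), sub_tmul, map_sub, sum_tmul, map_sum,
      sum_tmul, map_sum]
  rw [Finset.sum_congr rfl (fun m _ => step m), Finset.sum_sub_distrib]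

theorem lie_rhs (D D' : Derivation k (R k n) (R k n)) (x : M) :
    (ρ D ∘ₗ ρ D' - ρ D' ∘ₗ ρ D) x =
      (∑ i : Fin n, ∑ j : Fin n,
        aC i (D (MvPolynomial.X i) ⊗ₜ aC j (D' (MvPolynomial.X j) ⊗ₜ x)))
      - (∑ i : Fin n, ∑ j : Fin n,
        aC i (D' (MvPolynomial.X i) ⊗ₜ aC j (D (MvPolynomial.X j) ⊗ₜ x))) := by
  have hone : ∀ (E E' : Derivation k (R k n) (R k n)),
      ρ E (ρ E' x) = ∑ i : Fin n, ∑ j : Fin n,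
        aC i (E (MvPolynomial.X i) ⊗ₜ aC j (E' (MvPolynomial.X j) ⊗ₜ x)) := by
    intro E E'
    rw [ρ_apply aC ρ hρ E', ρ_apply aC ρ hρ E]
    exact Finset.sum_congr rfl fun i _ => by rw [tmul_sum, map_sum]
  rw [LinearMap.sub_apply, LinearMap.comp_apply, LinearMap.comp_apply, hone, hone]

theorem lie_iff_P :
    (∀ D D' : Derivation k (R k n) (R k n),
        ρ ⁅D, D'⁆ = ρ D ∘ₗ ρ D' - ρ D' ∘ₗ ρ D) ↔ WittP aC := by
  classical
  have csum : ∀ (p : Fin n) (φ : Fin n → M), (∀ m, m ≠ p → φ m = 0) → ∑ m : Fin n, φ m = φ p :=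
    fun p φ h0 => Finset.sum_eq_single p (fun m _ hm => h0 m hm) (by simp)
  constructor
  · intro h i j f g x
    set D := MvPolynomial.mkDerivation k (Pi.single i f : Fin n → R k n) with hDdef
    set D' := MvPolynomial.mkDerivation k (Pi.single j g : Fin n → R k n) with hD'def
    have hDX : ∀ m, D (MvPolynomial.X m) = (Pi.single i f : Fin n → R k n) m := fun m => by
      rw [hDdef, MvPolynomial.mkDerivation_X]
    have hD'X : ∀ m, D' (MvPolynomial.X m) = (Pi.single j g : Fin n → R k n) m := fun m => by
      rw [hD'def, MvPolynomial.mkDerivation_X]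
    have hx := congrArg (fun L : M →ₗ[k] M => L x) (h D D')
    rw [lie_lhs aC ρ hρ D D' x, lie_rhs aC ρ hρ D D' x] at hx
    simp only [hDX, hD'X] at hx
    have e1 : (∑ m : Fin n, ∑ p : Fin n,
        aC m (((Pi.single i f : Fin n → R k n) p *
          MvPolynomial.pderiv p ((Pi.single j g : Fin n → R k n) m)) ⊗ₜ x))
        = aC j ((f * MvPolynomial.pderiv i g) ⊗ₜ[k] x) := by
      rw [csum j _ (fun m hm => Finset.sum_eq_zero fun p _ => by
        rw [Pi.single_eq_of_ne hm, map_zero, mul_zero, zero_tmul, map_zero])]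
      rw [csum i _ (fun p hp => by rw [Pi.single_eq_of_ne hp, zero_mul, zero_tmul, map_zero])]
      rw [Pi.single_eq_same, Pi.single_eq_same]
    have e2 : (∑ m : Fin n, ∑ p : Fin n,
        aC m (((Pi.single j g : Fin n → R k n) p *
          MvPolynomial.pderiv p ((Pi.single i f : Fin n → R k n) m)) ⊗ₜ x))
        = aC i ((g * MvPolynomial.pderiv j f) ⊗ₜ[k] x) := by
      rw [csum i _ (fun m hm => Finset.sum_eq_zero fun p _ => by
        rw [Pi.single_eq_of_ne hm, map_zero, mul_zero, zero_tmul, map_zero])]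
      rw [csum j _ (fun p hp => by rw [Pi.single_eq_of_ne hp, zero_mul, zero_tmul, map_zero])]
      rw [Pi.single_eq_same, Pi.single_eq_same]
    have e3 : (∑ p : Fin n, ∑ q : Fin n,
        aC p ((Pi.single i f : Fin n → R k n) p ⊗ₜ
          aC q ((Pi.single j g : Fin n → R k n) q ⊗ₜ x)))
        = aC i (f ⊗ₜ aC j (g ⊗ₜ x)) := by
      rw [csum i _ (fun p hp => Finset.sum_eq_zero fun q _ => by
        rw [Pi.single_eq_of_ne hp, zero_tmul, map_zero])]
      rw [csum j _ (fun q hq => by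
        rw [Pi.single_eq_of_ne hq, zero_tmul, map_zero, tmul_zero, map_zero])]
      rw [Pi.single_eq_same, Pi.single_eq_same]
    have e4 : (∑ p : Fin n, ∑ q : Fin n,
        aC p ((Pi.single j g : Fin n → R k n) p ⊗ₜ
          aC q ((Pi.single i f : Fin n → R k n) q ⊗ₜ x)))
        = aC j (g ⊗ₜ aC i (f ⊗ₜ x)) := by
      rw [csum j _ (fun p hp => Finset.sum_eq_zero fun q _ => by
        rw [Pi.single_eq_of_ne hp, zero_tmul, map_zero])]
      rw [csum i _ (fun q hq => by
        rw [Pi.single_eq_of_ne hq, zero_tmul, map_zero, tmul_zero, map_zero])]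
      rw [Pi.single_eq_same, Pi.single_eq_same]
    rw [e1, e2, e3, e4] at hx
    exact hx.symm
  · intro hP D D'
    ext x
    rw [lie_lhs aC ρ hρ D D' x, lie_rhs aC ρ hρ D D' x]
    have key : ∑ p : Fin n, ∑ m : Fin n,
        (aC p (D (MvPolynomial.X p) ⊗ₜ aC m (D' (MvPolynomial.X m) ⊗ₜ x))
          - aC m (D' (MvPolynomial.X m) ⊗ₜ aC p (D (MvPolynomial.X p) ⊗ₜ x)))
        = ∑ p : Fin n, ∑ m : Fin n,
        (aC m ((D (MvPolynomial.X p) * MvPolynomial.pderiv p (D' (MvPolynomial.X m))) ⊗ₜ x)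
          - aC p ((D' (MvPolynomial.X m) * MvPolynomial.pderiv m (D (MvPolynomial.X p))) ⊗ₜ x)) :=
      Finset.sum_congr rfl fun p _ => Finset.sum_congr rfl fun m _ =>
        hP p m (D (MvPolynomial.X p)) (D' (MvPolynomial.X m)) x
    simp only [Finset.sum_sub_distrib] at key
    rw [show (∑ m : Fin n, ∑ p : Fin n,
        aC m ((D (MvPolynomial.X p) * MvPolynomial.pderiv p (D' (MvPolynomial.X m))) ⊗ₜ x))
        = ∑ p : Fin n, ∑ m : Fin n,
        aC m ((D (MvPolynomial.X p) * MvPolynomial.pderiv p (D' (MvPolynomial.X m))) ⊗ₜ x)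
      from Finset.sum_comm]
    rw [show (∑ p : Fin n, ∑ q : Fin n,
        aC p (D' (MvPolynomial.X p) ⊗ₜ aC q (D (MvPolynomial.X q) ⊗ₜ x)))
        = ∑ p : Fin n, ∑ m : Fin n,
        aC m (D' (MvPolynomial.X m) ⊗ₜ aC p (D (MvPolynomial.X p) ⊗ₜ x))
      from Finset.sum_comm]
    exact key.symm

end CurriedWittAux

/-- Let `a : R ⊗ M → V ⊗ M` be a `k`-linear map, write
`a(f ⊗ x) = ∑ᵢ xᵢ ⊗ aᵢ(f ⊗ x)`, and define `ρ_a : Der_k(R) → End_k(M)` by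
`ρ_a(D)(x) = ∑ᵢ aᵢ(D(xᵢ) ⊗ x)` (recall every `k`-derivation `D` of `R` equals
`∑ᵢ D(xᵢ)·∂/∂xᵢ`).  Then `ρ_a` is a Lie algebra homomorphism from the Lie algebra of
`k`-derivations of `R` (with the commutator bracket) to `End_k(M)` if and only if `a`
satisfies the curried Witt identity. -/
theorem statement6 (k : Type) [CommRing k] (n : ℕ) (M : Type) [AddCommGroup M] [Module k M]
    (a : (R k n) ⊗[k] M →ₗ[k] (V k n) ⊗[k] M)
    (aC : Fin n → ((R k n) ⊗[k] M →ₗ[k] M))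
    (ha : ∀ z : (R k n) ⊗[k] M, a z = ∑ i : Fin n, (xV k n i) ⊗ₜ[k] (aC i z))
    (ρ : Derivation k (R k n) (R k n) → (M →ₗ[k] M))
    (hρ : ∀ (D : Derivation k (R k n) (R k n)),
      ρ D = ∑ i : Fin n, (aC i) ∘ₗ (TensorProduct.mk k (R k n) M (D (MvPolynomial.X i)))) :
    (∀ D D' : Derivation k (R k n) (R k n),
        ρ ⁅D, D'⁆ = ρ D ∘ₗ ρ D' - ρ D' ∘ₗ ρ D) ↔
      CurriedWittIdentity a :=
  (CurriedWittAux.lie_iff_P aC ρ hρ).trans (CurriedWittAux.witt_iff_P a aC ha).symm
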